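/- Let p ∈ (0,1) and γ ∈ ℝ with p < |γ| < 1/p. For f_γ(y) = γ^{Σ_i y_i} on ℤⁿ and x̃ = x + DLap(p)ⁿ, the expectation E[|f_γ(x̃)|] is finite, and the unique unbiased estimator from the tensorized debiasing operator equals g_γ(y) = A(γ)ⁿ·f_γ(y), where A(γ) = 1 - (p/(1-p)²)·(1-γ)²/γ. Moreover, if √p < |γ| < 1/√p then Var[g_γ(x̃)] = A(γ)^{2n}·Var[f_γ(x̃)]. -/

import Mathlib

open scoped BigOperators

private lemma abs_zpow' (γ : ℝ) (k : ℤ) : |γ ^ k| = |γ| ^ k := by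
  rcases k with n | n
  · simp [abs_pow]
  · simp [zpow_negSucc, abs_inv, abs_pow]

private lemma zpow_finset_sum (γ : ℝ) (hγ : γ ≠ 0) {ι : Type*} (s : Finset ι) (f : ι → ℤ) :
    γ ^ (∑ i ∈ s, f i) = ∏ i ∈ s, γ ^ f i := by
  classical
  induction s using Finset.cons_induction with
  | empty => simp
  | cons a s ha ih => rw [Finset.sum_cons, Finset.prod_cons, zpow_add₀ hγ, ih]

private lemma summable_geom_two_sided (p r : ℝ) (hp : 0 < p) (hr : 0 < r)
    (h1 : p * r < 1) (h2 : p < r) :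
    Summable fun t : ℤ => p ^ |t| * r ^ t := by
  apply Summable.of_nat_of_neg
  · refine (summable_geometric_of_lt_one (by positivity) h1).congr fun m => ?_
    rw [mul_pow]
    simp [zpow_natCast]
  · have hlt : p * r⁻¹ < 1 := by
      rw [mul_inv_lt_iff₀ hr, one_mul]; exact h2
    refine (summable_geometric_of_lt_one (by positivity) hlt).congr fun m => ?_
    rw [mul_pow]
    simp [zpow_natCast, inv_pow]

private lemma summable_pi_prod : ∀ (n : ℕ) (g : Fin n → ℤ → ℝ),
    (∀ j, Summable fun t => g j t) → (∀ j t, 0 ≤ g j t) →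
    Summable fun η : Fin n → ℤ => ∏ j, g j (η j) := by
  intro n
  induction n with
  | zero => intro g _ _; exact Summable.of_finite
  | succ n ih =>
    intro g hg hg0
    have h2 : Summable fun η : Fin n → ℤ => ∏ j, g j.succ (η j) :=
      ih _ (fun j => hg j.succ) (fun j t => hg0 j.succ t)
    have hgen : ∀ (F : ℤ → ℝ) (G : (Fin n → ℤ) → ℝ), Summable F → Summable G →
        (∀ a, 0 ≤ F a) → (∀ b, 0 ≤ G b) →
        Summable ((fun q : ℤ × (Fin n → ℤ) => F q.1 * G q.2) ∘ (Fin.consEquiv (fun _ : Fin (n + 1) => ℤ)).symm) :=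
      fun F G hF hG hF' hG' =>
        (Fin.consEquiv (fun _ : Fin (n + 1) => ℤ)).symm.summable_iff.2 (hF.mul_of_nonneg hG hF' hG')
    have key := hgen _ _ (hg 0) h2 (fun a => hg0 0 a)
      (fun b => Finset.prod_nonneg fun j _ => hg0 j.succ (b j))
    refine key.congr fun η => ?_
    simp [Fin.consEquiv, Fin.prod_univ_succ, Fin.tail]

/-- For exponential functions `f_γ(y) = γ^{Σ y_i}`, the expectation under
discrete Laplace noise exists, the tensorized debiasing operator acts as
multiplication by `A(γ)ⁿ`, and for `√p < |γ| < 1/√p` the variances satisfy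
`Var[g_γ(x̃)] = A(γ)^{2n} Var[f_γ(x̃)]`. -/
theorem discrete_laplace_power_function
    (p : ℝ) (hp0 : 0 < p) (hp1 : p < 1) (γ : ℝ)
    (hγlo : p < |γ|) (hγhi : |γ| < 1 / p)
    (n : ℕ) (x : Fin n → ℤ)
    (α : ℤ → ℝ)
    (hα : ∀ ξ : ℤ, α ξ = if ξ = 0 then 1 + 2 * p / (1 - p) ^ 2 else -p / (1 - p) ^ 2)
    (A : ℝ) (hA : A = 1 - p / (1 - p) ^ 2 * ((1 - γ) ^ 2 / γ))
    (fγ : (Fin n → ℤ) → ℝ) (hfγ : ∀ y : Fin n → ℤ, fγ y = γ ^ (∑ i, y i))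
    (w : (Fin n → ℤ) → ℝ)
    (hw : ∀ η : Fin n → ℤ, w η = ∏ j, (1 - p) / (1 + p) * p ^ |η j|) :
    (Summable fun η : Fin n → ℤ => w η * |fγ (x + η)|) ∧
      (∀ y : Fin n → ℤ,
        (∑ ξ ∈ Fintype.piFinset (fun _ : Fin n => ({-1, 0, 1} : Finset ℤ)),
            fγ (y + ξ) * ∏ j, α (ξ j)) = A ^ n * fγ y) ∧
      (Real.sqrt p < |γ| → |γ| < 1 / Real.sqrt p →
        ((∑' η : Fin n → ℤ, w η * fγ (x + η) ^ 2) -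
            (∑' η : Fin n → ℤ, w η * fγ (x + η)) ^ 2) *
          A ^ (2 * n) =
          (∑' η : Fin n → ℤ, w η * (A ^ n * fγ (x + η)) ^ 2) -
            (∑' η : Fin n → ℤ, w η * (A ^ n * fγ (x + η))) ^ 2) := by
  have habs : (0 : ℝ) < |γ| := hp0.trans hγlo
  have hγ0 : γ ≠ 0 := fun h => by simp [h] at habs
  have habs0 : |γ| ≠ 0 := ne_of_gt habs
  refine ⟨?_, ?_, ?_⟩
  · -- Summability
    set g : Fin n → ℤ → ℝ := fun j t => (1 - p) / (1 + p) * p ^ |t| * |γ| ^ (x j + t) with hg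
    have hpr : p * |γ| < 1 := by
      rw [lt_div_iff₀ hp0] at hγhi; linarith [mul_comm p |γ|]
    have hbase : Summable fun t : ℤ => p ^ |t| * |γ| ^ t :=
      summable_geom_two_sided p |γ| hp0 habs hpr hγlo
    have hgs : ∀ j, Summable fun t => g j t := by
      intro j
      refine (hbase.mul_left ((1 - p) / (1 + p) * |γ| ^ (x j))).congr fun t => ?_
      simp only [hg]
      rw [zpow_add₀ habs0]
      ring
    have hg0 : ∀ j t, 0 ≤ g j t := by
      intro j t
      have h1 : (0:ℝ) ≤ (1 - p) / (1 + p) := by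
        apply div_nonneg <;> linarith
      have h2 : (0:ℝ) ≤ p ^ |t| := zpow_nonneg hp0.le _
      have h3 : (0:ℝ) ≤ |γ| ^ (x j + t) := zpow_nonneg habs.le _
      positivity
    refine (summable_pi_prod n g hgs hg0).congr fun η => ?_
    rw [hw, hfγ, abs_zpow']
    have hs : ∑ i, (x + η) i = ∑ i, (x i + η i) := by
      apply Finset.sum_congr rfl; intro i _; rfl
    rw [hs, zpow_finset_sum |γ| habs0, ← Finset.prod_mul_distrib]
  · -- Debiasing operator acts as multiplication by A^n
    intro y
    have hsum : ∑ t ∈ ({-1, 0, 1} : Finset ℤ), γ ^ t * α t = A := by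
      rw [Finset.sum_insert (by decide), Finset.sum_insert (by decide),
        Finset.sum_singleton]
      rw [hα, hα, hα, hA]
      norm_num
      have h1p : (1 - p) ≠ 0 := by intro h; linarith [(by linarith : p = 1)]
      field_simp
      ring
    have key : ∀ ξ ∈ Fintype.piFinset (fun _ : Fin n => ({-1, 0, 1} : Finset ℤ)),
        fγ (y + ξ) * ∏ j, α (ξ j) =
          γ ^ (∑ i, y i) * ∏ j, (γ ^ (ξ j) * α (ξ j)) := by
      intro ξ _
      rw [hfγ]
      have hs : ∑ i, (y + ξ) i = (∑ i, y i) + ∑ i, ξ i := by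
        rw [← Finset.sum_add_distrib]
        apply Finset.sum_congr rfl; intro i _; rfl
      have hfac : γ ^ (∑ i, ξ i) * ∏ j, α (ξ j) = ∏ j, (γ ^ ξ j * α (ξ j)) := by
        rw [zpow_finset_sum γ hγ0, ← Finset.prod_mul_distrib]
      rw [hs, zpow_add₀ hγ0, mul_assoc, hfac]
    have hfactor : (∏ _j : Fin n, ∑ t ∈ ({-1, 0, 1} : Finset ℤ), γ ^ t * α t) =
        ∑ ξ ∈ Fintype.piFinset (fun _ : Fin n => ({-1, 0, 1} : Finset ℤ)),
          ∏ j, (γ ^ ξ j * α (ξ j)) :=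
      Finset.prod_univ_sum _ (fun _ t => γ ^ t * α t)
    rw [Finset.sum_congr rfl key, ← Finset.mul_sum, ← hfactor]
    simp only [hsum, Finset.prod_const, Finset.card_univ, Fintype.card_fin]
    rw [hfγ, mul_comm]
  · -- Variance identity
    intro _ _
    have hA2 : A ^ (2 * n) = A ^ n * A ^ n := by rw [two_mul, pow_add]
    have h1 : (∑' η : Fin n → ℤ, w η * (A ^ n * fγ (x + η))) =
        A ^ n * ∑' η : Fin n → ℤ, w η * fγ (x + η) := by
      rw [← tsum_mul_left]; exact tsum_congr fun η => by ring
    have h2 : (∑' η : Fin n → ℤ, w η * (A ^ n * fγ (x + η)) ^ 2) =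
        (A ^ n * A ^ n) * ∑' η : Fin n → ℤ, w η * fγ (x + η) ^ 2 := by
      rw [← tsum_mul_left]; exact tsum_congr fun η => by ring
    rw [h1, h2, hA2]
    ring
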